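/- Let n ≥ 2 be the largest natural number with m ≥ binom(n,2)+1. Then for every surjective colouring Δ : ℕ^(2) → [m], the set F_Δ has at least n elements. -/

import Mathlib

/-- The set of colours appearing on edges inside `X` under the edge-colouring `Δ`
of the complete graph on `ℕ`. -/
def colorsOn {C : Type*} (Δ : ℕ → ℕ → C) (X : Set ℕ) : Set C :=
  {c | ∃ x ∈ X, ∃ y ∈ X, x ≠ y ∧ Δ x y = c}

/-- `F_Δ`: the set of values `γ(X)` (number of colours inside `X`)
over infinite `X ⊆ ℕ`. -/
def FDelta {C : Type*} (Δ : ℕ → ℕ → C) : Set ℕ :=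
  {k | ∃ X : Set ℕ, X.Infinite ∧ (colorsOn Δ X).ncard = k}

section Aux

variable {m : ℕ}

lemma colorsOn_mono (Δ : ℕ → ℕ → Fin m) {X X' : Set ℕ} (h : X ⊆ X') :
    colorsOn Δ X ⊆ colorsOn Δ X' := by
  rintro c ⟨x, hx, y, hy, hxy, hc⟩
  exact ⟨x, h hx, y, h hy, hxy, hc⟩

/-- `γ(X)`. -/
noncomputable def gam (Δ : ℕ → ℕ → Fin m) (X : Set ℕ) : ℕ := (colorsOn Δ X).ncard

lemma gam_mono (Δ : ℕ → ℕ → Fin m) {X X' : Set ℕ} (h : X ⊆ X') :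
    gam Δ X ≤ gam Δ X' :=
  Set.ncard_le_ncard (colorsOn_mono Δ h) (Set.toFinite _)

lemma gam_mem (Δ : ℕ → ℕ → Fin m) {X : Set ℕ} (hX : X.Infinite) :
    gam Δ X ∈ FDelta Δ := ⟨X, hX, rfl⟩

lemma gam_le (Δ : ℕ → ℕ → Fin m) (X : Set ℕ) : gam Δ X ≤ m := by
  have : (colorsOn Δ X).ncard ≤ (Set.univ : Set (Fin m)).ncard :=
    Set.ncard_le_ncard (Set.subset_univ _) (Set.toFinite _)
  simpa [gam, Set.ncard_univ] using this

lemma FDelta_finite (Δ : ℕ → ℕ → Fin m) : (FDelta Δ).Finite := by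
  apply (Set.finite_Iic m).subset
  rintro k ⟨X, hX, rfl⟩
  exact gam_le Δ X

/-- number of values of `F_Δ` that are at most `v`. -/
noncomputable def phi (Δ : ℕ → ℕ → Fin m) (v : ℕ) : ℕ :=
  (FDelta Δ ∩ Set.Iic v).ncard

lemma phi_mono (Δ : ℕ → ℕ → Fin m) {v v' : ℕ} (h : v ≤ v') :
    phi Δ v ≤ phi Δ v' :=
  Set.ncard_le_ncard (Set.inter_subset_inter_right _ (Set.Iic_subset_Iic.2 h))
    ((FDelta_finite Δ).inter_of_left _)

lemma phi_pos (Δ : ℕ → ℕ → Fin m) {v : ℕ} (hv : v ∈ FDelta Δ) :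
    1 ≤ phi Δ v := by
  have : 0 < (FDelta Δ ∩ Set.Iic v).ncard :=
    (Set.ncard_pos ((FDelta_finite Δ).inter_of_left _)).2 ⟨v, hv, Set.mem_Iic.2 le_rfl⟩
  exact this

lemma phi_lt (Δ : ℕ → ℕ → Fin m) {v v' : ℕ} (h : v < v') (hv' : v' ∈ FDelta Δ) :
    phi Δ v + 1 ≤ phi Δ v' := by
  have hnm : v' ∉ FDelta Δ ∩ Set.Iic v := fun hmem => absurd hmem.2 (not_le.2 h)
  have hins : insert v' (FDelta Δ ∩ Set.Iic v) ⊆ FDelta Δ ∩ Set.Iic v' := by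
    rintro k (rfl | ⟨hk1, hk2⟩)
    · exact ⟨hv', Set.mem_Iic.2 le_rfl⟩
    · exact ⟨hk1, le_trans hk2 h.le⟩
  calc phi Δ v + 1 = (insert v' (FDelta Δ ∩ Set.Iic v)).ncard :=
        (Set.ncard_insert_of_notMem hnm ((FDelta_finite Δ).inter_of_left _)).symm
    _ ≤ phi Δ v' := Set.ncard_le_ncard hins ((FDelta_finite Δ).inter_of_left _)

/-- infinite pigeonhole -/
lemma pig (Y : Set ℕ) (hY : Y.Infinite) (f : ℕ → Fin m) :
    ∃ c, {y ∈ Y | f y = c}.Infinite := by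
  by_contra h
  push_neg at h
  exact hY ((Set.finite_iUnion h).subset
    (fun y hy => Set.mem_iUnion.2 ⟨f y, hy, rfl⟩))

/-- infinite Ramsey theorem for pairs -/
lemma myRamsey (Δ : ℕ → ℕ → Fin m) (hsym : ∀ x y, Δ x y = Δ y x) :
    ∃ X : Set ℕ, X.Infinite ∧ ∃ c₀ : Fin m, ∀ x ∈ X, ∀ y ∈ X, x ≠ y → Δ x y = c₀ := by
  classical
  have step : ∀ p : {Y : Set ℕ // Y.Infinite},
      ∃ (a : ℕ) (c : Fin m) (q : {Y : Set ℕ // Y.Infinite}),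
      a ∈ p.1 ∧ q.1 ⊆ p.1 ∧ ∀ y ∈ q.1, a < y ∧ Δ a y = c := by
    rintro ⟨Y, hY⟩
    obtain ⟨a, ha⟩ := hY.nonempty
    have h1 : (Y \ Set.Iic a).Infinite := hY.diff (Set.finite_Iic a)
    obtain ⟨c, hc⟩ := pig _ h1 (Δ a)
    refine ⟨a, c, ⟨_, hc⟩, ha, ?_, ?_⟩
    · intro y hy; exact hy.1.1
    · rintro y ⟨⟨hy1, hy2⟩, hy3⟩
      exact ⟨not_le.mp (by simpa using hy2), hy3⟩
  choose A C Q hA hQ hP using step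
  let g : ℕ → {Y : Set ℕ // Y.Infinite} :=
    fun k => Nat.rec ⟨Set.univ, Set.infinite_univ⟩ (fun _ p => Q p) k
  have hg : ∀ k, g (k + 1) = Q (g k) := fun k => rfl
  set a : ℕ → ℕ := fun k => A (g k) with ha
  set c : ℕ → Fin m := fun k => C (g k) with hcdef
  have hmem : ∀ k, a k ∈ (g k).1 := fun k => hA (g k)
  have hsub1 : ∀ k, (g (k + 1)).1 ⊆ (g k).1 := fun k => by
    rw [hg]; exact hQ (g k)
  have hchain : ∀ i j, i ≤ j → (g j).1 ⊆ (g i).1 := by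
    intro i j hij
    induction j with
    | zero => rw [Nat.le_zero.mp hij]
    | succ j ih =>
      rcases Nat.eq_or_lt_of_le hij with rfl | hlt
      · exact subset_rfl
      · exact (hsub1 j).trans (ih (Nat.lt_succ_iff.mp hlt))
  have hkey : ∀ i j, i < j → a i < a j ∧ Δ (a i) (a j) = c i := by
    intro i j hij
    have h1 : a j ∈ (g (i + 1)).1 := hchain (i + 1) j hij (hmem j)
    rw [hg] at h1
    exact hP (g i) (a j) h1
  have hasm : StrictMono a := fun i j h => (hkey i j h).1
  obtain ⟨c₀, hc₀⟩ := pig Set.univ Set.infinite_univ c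
  refine ⟨a '' {k ∈ Set.univ | c k = c₀}, hc₀.image (hasm.injective.injOn), c₀, ?_⟩
  rintro x ⟨i, hi, rfl⟩ y ⟨j, hj, rfl⟩ hxy
  have hij : i ≠ j := fun h => hxy (by rw [h])
  rcases hij.lt_or_gt with h | h
  · rw [(hkey i j h).2]; exact hi.2
  · rw [hsym, (hkey j i h).2]; exact hj.2

/-- refine an infinite set so that links to each vertex in `S` are monochromatic -/
lemma links (Δ : ℕ → ℕ → Fin m) (S : Finset ℕ) :
    ∀ Y : Set ℕ, Y.Infinite →
    ∃ Y' : Set ℕ, Y' ⊆ Y ∧ Y'.Infinite ∧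
      ∀ u ∈ S, ∃ cu : Fin m, ∀ y ∈ Y', y ≠ u → Δ u y = cu := by
  classical
  induction S using Finset.induction_on with
  | empty => exact fun Y hY => ⟨Y, subset_rfl, hY, by simp⟩
  | insert _ _ hnot ih =>
    rename_i u S
    intro Y hY
    obtain ⟨Y', h1, h2, h3⟩ := ih Y hY
    obtain ⟨cu, hcu⟩ := pig Y' h2 (Δ u)
    refine ⟨{y ∈ Y' | Δ u y = cu}, fun y hy => h1 hy.1, hcu, ?_⟩
    intro v hv
    rcases Finset.mem_insert.1 hv with rfl | hv
    · exact ⟨cu, fun y hy _ => hy.2⟩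
    · obtain ⟨cv, hcv⟩ := h3 v hv
      exact ⟨cv, fun y hy hyv => hcv y hy.1 hyv⟩


lemma jump (Δ : ℕ → ℕ → Fin m) (hsym : ∀ x y, Δ x y = Δ y x)
    (Y T : Set ℕ) (hY : Y.Infinite) (u : ℕ) (cu : Fin m)
    (hu : ∀ y ∈ Y, y ≠ u → Δ u y = cu) (huY : u ∉ Y) (huT : u ∉ T) :
    gam Δ (Y ∪ T ∪ {u}) ≤ gam Δ (Y ∪ T) + phi Δ (gam Δ (Y ∪ T ∪ {u})) := by
  classical
  set A : Set ℕ := Y ∪ T with hAdef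
  set B : Set ℕ := Y ∪ T ∪ {u} with hBdef
  set N' : Set (Fin m) := (colorsOn Δ B \ colorsOn Δ A) \ {cu} with hN'def
  -- witnesses in `T` for each fresh non-link colour
  have hwit : ∀ c : Fin m, ∃ x : ℕ, c ∈ N' → x ∈ T ∧ x ≠ u ∧ Δ u x = c := by
    intro c
    by_cases hc : c ∈ N'
    · obtain ⟨⟨hcB, hcA⟩, hccu⟩ := hc
      have hccu' : c ≠ cu := by simpa using hccu
      obtain ⟨x, hx, y, hy, hxy, hΔ⟩ := hcB
      have hcases : ∀ z : ℕ, z ∈ B → z ∈ A ∨ z = u := by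
        intro z hz
        rcases hz with hz | hz
        · exact Or.inl hz
        · exact Or.inr hz
      -- helper: an `A`-endpoint paired with `u` must lie in `T`
      have hfromA : ∀ z : ℕ, z ∈ A → z ≠ u → Δ u z = c → ∃ x : ℕ, x ∈ T ∧ x ≠ u ∧ Δ u x = c := by
        intro z hz hzu hΔz
        rcases hz with hzY | hzT
        · exact absurd (hΔz.symm.trans (hu z hzY hzu)) hccu'
        · exact ⟨z, hzT, hzu, hΔz⟩
      rcases hcases x hx with hxA | rfl
      · rcases hcases y hy with hyA | rfl
        · exact absurd ⟨x, hxA, y, hyA, hxy, hΔ⟩ hcA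
        · exact (hfromA x hxA hxy ((hsym y x).trans hΔ)).imp (fun x hx _ => hx)
      · rcases hcases y hy with hyA | rfl
        · exact (hfromA y hyA (Ne.symm hxy) hΔ).imp (fun x hx _ => hx)
        · exact absurd rfl hxy
    · exact ⟨0, fun h => absurd h hc⟩
  choose xw hxw using hwit
  set Z : Set (Fin m) → Set ℕ := fun A' => Y ∪ {u} ∪ (xw '' A') with hZdef
  have hZinf : ∀ A', (Z A').Infinite :=
    fun A' => hY.mono (fun y hy => Or.inl (Or.inl hy))
  have hZsubB : ∀ A', A' ⊆ N' → Z A' ⊆ B := by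
    rintro A' hsub z ((hz | hz) | ⟨c, hc, rfl⟩)
    · exact Or.inl (Or.inl hz)
    · exact Or.inr hz
    · exact Or.inl (Or.inr (hxw c (hsub hc)).1)
  have key1 : ∀ A', A' ⊆ N' → ∀ c ∈ A', c ∈ colorsOn Δ (Z A') := by
    intro A' hsub c hc
    obtain ⟨hT, hne, hΔ⟩ := hxw c (hsub hc)
    exact ⟨u, Or.inl (Or.inr rfl), xw c, Or.inr ⟨c, hc, rfl⟩, Ne.symm hne, hΔ⟩
  have key2 : ∀ A', A' ⊆ N' → ∀ c ∈ N', c ∈ colorsOn Δ (Z A') → c ∈ A' := by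
    intro A' hsub c hcN hccol
    obtain ⟨⟨hcB, hcA⟩, hccu0⟩ := hcN
    have hccu' : c ≠ cu := by simpa using hccu0
    obtain ⟨x, hx, y, hy, hxy, hΔ⟩ := hccol
    have himgT : ∀ z : ℕ, z ∈ xw '' A' → z ∈ T := by
      rintro z ⟨c', hc', rfl⟩
      exact (hxw c' (hsub hc')).1
    have hedge : ∀ z : ℕ, z ∈ Y ∪ (xw '' A') → z ≠ u → Δ u z = c → c ∈ A' := by
      rintro z (hz | hz) hzu hΔz
      · exact absurd (hΔz.symm.trans (hu z hz hzu)) hccu'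
      · obtain ⟨c', hc', rfl⟩ := hz
        have := (hxw c' (hsub hc')).2.2
        rw [hΔz] at this
        rw [this]; exact hc'
    have hsplit : ∀ z : ℕ, z ∈ Z A' → z ∈ Y ∪ (xw '' A') ∨ z = u := by
      rintro z ((hz | hz) | hz)
      · exact Or.inl (Or.inl hz)
      · exact Or.inr hz
      · exact Or.inl (Or.inr hz)
    rcases hsplit x hx with hx' | rfl
    · rcases hsplit y hy with hy' | rfl
      · -- both endpoints in A : colour old, contradiction
        have hxA : x ∈ A := by
          rcases hx' with h | h
          · exact Or.inl h
          · exact Or.inr (himgT x h)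
        have hyA : y ∈ A := by
          rcases hy' with h | h
          · exact Or.inl h
          · exact Or.inr (himgT y h)
        exact absurd ⟨x, hxA, y, hyA, hxy, hΔ⟩ hcA
      · exact hedge x hx' hxy ((hsym y x).trans hΔ)
    · rcases hsplit y hy with hy' | rfl
      · exact hedge y hy' (Ne.symm hxy) hΔ
      · exact absurd rfl hxy
  have key3 : ∀ A', A' ⊆ N' → ∀ c ∈ N', c ∉ A' →
      gam Δ (Z A') < gam Δ (Z (insert c A')) := by
    intro A' hsub c hcN hcA
    have hins : insert c A' ⊆ N' := Set.insert_subset hcN hsub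
    apply Set.ncard_lt_ncard _ (Set.toFinite _)
    rw [Set.ssubset_def]
    constructor
    · exact colorsOn_mono Δ (Set.union_subset_union_right _
        (Set.image_mono (Set.subset_insert _ _)))
    · intro hcontra
      exact hcA (key2 A' hsub c hcN
        (hcontra (key1 (insert c A') hins c (Set.mem_insert _ _))))
  have inner : ∀ (j : ℕ) (A' : Set (Fin m)), A' ⊆ N' → A'.ncard = j →
      j + 1 ≤ phi Δ (gam Δ (Z A')) := by
    intro j
    induction j with
    | zero => exact fun A' hsub hcard => phi_pos Δ (gam_mem Δ (hZinf A'))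
    | succ j ih =>
      intro A' hsub hcard
      have hne : A'.Nonempty := Set.nonempty_of_ncard_ne_zero (by omega)
      obtain ⟨c, hc⟩ := hne
      have h0 : (A' \ {c}).ncard = j := by
        rw [Set.ncard_diff_singleton_of_mem hc, hcard]; omega
      have ih' := ih (A' \ {c}) (Set.diff_subset.trans hsub) h0
      have hlt := key3 (A' \ {c}) (Set.diff_subset.trans hsub) c (hsub hc) (by simp)
      rw [Set.insert_diff_singleton, Set.insert_eq_self.mpr hc] at hlt
      have hstep := phi_lt Δ hlt (gam_mem Δ (hZinf A'))
      omega
  have hBsub : colorsOn Δ B ⊆ colorsOn Δ A ∪ (colorsOn Δ B \ colorsOn Δ A) := by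
    intro c hc
    by_cases h : c ∈ colorsOn Δ A
    · exact Or.inl h
    · exact Or.inr ⟨hc, h⟩
  have hb1 : gam Δ B ≤ gam Δ A + (colorsOn Δ B \ colorsOn Δ A).ncard :=
    le_trans (Set.ncard_le_ncard hBsub (Set.toFinite _)) (Set.ncard_union_le _ _)
  have hb2 : (colorsOn Δ B \ colorsOn Δ A).ncard ≤ N'.ncard + 1 := by
    have hsub2 : colorsOn Δ B \ colorsOn Δ A ⊆ insert cu N' := by
      intro c hc
      by_cases h : c = cu
      · exact Or.inl h
      · exact Or.inr ⟨hc, by simpa using h⟩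
    exact le_trans (Set.ncard_le_ncard hsub2 (Set.toFinite _)) (Set.ncard_insert_le _ _)
  have hb3 : N'.ncard + 1 ≤ phi Δ (gam Δ (Z N')) := inner N'.ncard N' subset_rfl rfl
  have hb4 : phi Δ (gam Δ (Z N')) ≤ phi Δ (gam Δ B) :=
    phi_mono Δ (gam_mono Δ (hZsubB N' subset_rfl))
  omega

end Aux

/-- Narayanan's theorem: if `n ≥ 2` is the largest natural number with
`m ≥ binom(n,2)+1`, then `|F_Δ| ≥ n` for every surjective `m`-colouring `Δ`. -/
theorem stmt4 {m n : ℕ} (hn : 2 ≤ n) (h1 : n.choose 2 + 1 ≤ m)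
    (h2 : m < (n + 1).choose 2 + 1)
    (Δ : ℕ → ℕ → Fin m)
    (hsym : ∀ x y, Δ x y = Δ y x)
    (hsurj : ∀ c : Fin m, ∃ x y : ℕ, x ≠ y ∧ Δ x y = c) :
    n ≤ (FDelta Δ).ncard := by
  classical
  have hm2 : 1 ≤ n.choose 2 := by
    have h := Nat.choose_le_choose 2 hn
    simpa using h
  choose pa pb hpab hpc using hsurj
  set S : Finset ℕ := Finset.univ.biUnion (fun c : Fin m => {pa c, pb c}) with hSdef
  obtain ⟨X₀, hX₀inf, c₀, hX₀⟩ := myRamsey Δ hsym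
  obtain ⟨Y, hYX₀, hYinf, hL⟩ := links Δ S X₀ hX₀inf
  have hYmono : ∀ x ∈ Y, ∀ y ∈ Y, x ≠ y → Δ x y = c₀ :=
    fun x hx y hy hxy => hX₀ x (hYX₀ hx) y (hYX₀ hy) hxy
  have hY1 : gam Δ Y = 1 := by
    have hcol : colorsOn Δ Y = {c₀} := by
      apply Set.Subset.antisymm
      · rintro c ⟨x, hx, y, hy, hxy, rfl⟩
        exact hYmono x hx y hy hxy
      · intro c hc
        rw [Set.mem_singleton_iff] at hc
        subst hc
        obtain ⟨x, hx, y, hy, hxy⟩ := hYinf.nontrivial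
        exact ⟨x, hx, y, hy, hxy, hYmono x hx y hy hxy⟩
    rw [gam, hcol, Set.ncard_singleton]
  have main : ∀ T : Finset ℕ, T ⊆ S →
      gam Δ (Y ∪ ↑T) ≤ (phi Δ (gam Δ (Y ∪ ↑T)) + 1).choose 2 := by
    intro T
    induction T using Finset.induction_on with
    | empty =>
      intro _
      rw [Finset.coe_empty, Set.union_empty, hY1]
      have h1p := phi_pos Δ (hY1 ▸ gam_mem Δ hYinf)
      calc (1:ℕ) = (2).choose 2 := by simp
        _ ≤ (phi Δ 1 + 1).choose 2 := Nat.choose_le_choose 2 (by omega)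
    | insert _ _ hnot ih =>
      rename_i u T
      intro hsub
      have huS : u ∈ S := hsub (Finset.mem_insert_self u T)
      have hTS : T ⊆ S := fun x hx => hsub (Finset.mem_insert_of_mem hx)
      have hcoe : (↑(insert u T) : Set ℕ) = ↑T ∪ {u} := by
        rw [Finset.coe_insert]; ext z; simp [or_comm]
      by_cases hmem : u ∈ Y ∪ (↑T : Set ℕ)
      · have hset : (Y ∪ ↑(insert u T) : Set ℕ) = Y ∪ ↑T := by
          rw [hcoe, ← Set.union_assoc]
          exact Set.union_eq_self_of_subset_right (Set.singleton_subset_iff.2 hmem)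
        rw [hset]
        exact ih hTS
      · have huY : u ∉ Y := fun h => hmem (Or.inl h)
        have huT : u ∉ (↑T : Set ℕ) := fun h => hmem (Or.inr h)
        obtain ⟨cu, hcu⟩ := hL u huS
        have hj := jump Δ hsym Y ↑T hYinf u cu (fun y hy hyu => hcu y hy hyu) huY huT
        have hset : (Y ∪ ↑(insert u T) : Set ℕ) = Y ∪ ↑T ∪ {u} := by
          rw [hcoe, ← Set.union_assoc]
        rw [hset]
        have hmono : gam Δ (Y ∪ ↑T) ≤ gam Δ (Y ∪ ↑T ∪ {u}) :=
          gam_mono Δ (fun z hz => Or.inl hz)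
        rcases eq_or_lt_of_le hmono with heq | hlt
        · rw [← heq]
          exact ih hTS
        · have hw'F : gam Δ (Y ∪ ↑T ∪ {u}) ∈ FDelta Δ :=
            gam_mem Δ (hYinf.mono (fun y hy => Or.inl (Or.inl hy)))
          have hphi := phi_lt Δ hlt hw'F
          have hih := ih hTS
          have hcle : (phi Δ (gam Δ (Y ∪ ↑T)) + 1).choose 2
              ≤ (phi Δ (gam Δ (Y ∪ ↑T ∪ {u}))).choose 2 :=
            Nat.choose_le_choose 2 (by omega)
          have hrec : (phi Δ (gam Δ (Y ∪ ↑T ∪ {u})) + 1).choose 2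
              = (phi Δ (gam Δ (Y ∪ ↑T ∪ {u}))).choose 2 + phi Δ (gam Δ (Y ∪ ↑T ∪ {u})) := by
            rw [Nat.choose_succ_succ' _ 1, Nat.choose_one_right, Nat.add_comm]
          omega
  have hfull : colorsOn Δ (Y ∪ ↑S) = Set.univ := by
    ext c
    simp only [Set.mem_univ, iff_true]
    have hpaS : pa c ∈ S :=
      Finset.mem_biUnion.2 ⟨c, Finset.mem_univ c, Finset.mem_insert_self _ _⟩
    have hpbS : pb c ∈ S :=
      Finset.mem_biUnion.2 ⟨c, Finset.mem_univ c,
        Finset.mem_insert_of_mem (Finset.mem_singleton_self _)⟩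
    exact ⟨pa c, Or.inr hpaS, pb c, Or.inr hpbS, hpab c, hpc c⟩
  have hgamS : gam Δ (Y ∪ ↑S) = m := by
    rw [gam, hfull, Set.ncard_univ]
    simp [Nat.card_eq_fintype_card]
  have hmain := main S subset_rfl
  rw [hgamS] at hmain
  have hphile : phi Δ m ≤ (FDelta Δ).ncard :=
    Set.ncard_le_ncard Set.inter_subset_left (FDelta_finite Δ)
  by_contra hcon
  push_neg at hcon
  have hfin : (phi Δ m + 1).choose 2 ≤ n.choose 2 := Nat.choose_le_choose 2 (by omega)
  omega
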